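/- Let R be a commutative Noetherian ring with total quotient ring Q(R) and integral closure R̄ of R in Q(R). Then R̄ = ⋃_{I} (I : I), where the union runs over all trace ideals I of R containing a non-zerodivisor, and (I : I) = {α ∈ Q(R) : αI ⊆ I}. Consequently, if R has only finitely many regular trace ideals, then R̄ is a finitely generated R-module. -/

import Mathlib

set_option synthInstance.maxHeartbeats 800000
/-- The trace ideal of an `R`-module `M`. -/
def traceIdeal (R : Type*) [CommRing R] (M : Type*) [AddCommGroup M] [Module R M] : Ideal R :=
  ⨆ f : M →ₗ[R] R, LinearMap.range f

section aux
variable {R : Type*} [CommRing R]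

lemma le_traceIdeal (I : Ideal R) : I ≤ traceIdeal R I := by
  intro x hx
  exact Submodule.mem_iSup_of_mem I.subtype ⟨⟨x, hx⟩, rfl⟩

lemma traceIdeal_idem (I : Ideal R) : traceIdeal R (traceIdeal R I) = traceIdeal R I := by
  refine le_antisymm (iSup_le fun f => ?_) (le_traceIdeal _)
  rintro _ ⟨⟨x, hx⟩, rfl⟩
  suffices h : ∀ (hx' : x ∈ traceIdeal R I), f ⟨x, hx'⟩ ∈ traceIdeal R I from h hx
  have hx2 : x ∈ ⨆ g : I →ₗ[R] R, LinearMap.range g := hx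
  clear hx
  refine Submodule.iSup_induction' (p := fun g : I →ₗ[R] R => LinearMap.range g)
    (motive := fun y _ => ∀ (hy' : y ∈ traceIdeal R I), f ⟨y, hy'⟩ ∈ traceIdeal R I)
    (fun g m hm => ?_) ?_ (fun a b ha hb hfa hfb => ?_) hx2
  · obtain ⟨m', rfl⟩ := hm
    intro hy'
    have hg : ∀ z, g z ∈ traceIdeal R I := fun z => Submodule.mem_iSup_of_mem g ⟨z, rfl⟩
    have : f ⟨g m', hy'⟩ = (f ∘ₗ g.codRestrict (traceIdeal R I) hg) m' := rfl
    rw [this]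
    exact Submodule.mem_iSup_of_mem (f ∘ₗ g.codRestrict (traceIdeal R I) hg) ⟨m', rfl⟩
  · intro hy'
    have : f ⟨0, hy'⟩ = f 0 := rfl
    rw [this, map_zero]; exact Submodule.zero_mem _
  · intro hy'
    have ha' : a ∈ traceIdeal R I := ha
    have hb' : b ∈ traceIdeal R I := hb
    have : f ⟨a + b, hy'⟩ = f ⟨a, ha'⟩ + f ⟨b, hb'⟩ := by rw [← map_add]; rfl
    rw [this]; exact Submodule.add_mem _ (hfa ha') (hfb hb')

lemma frac_linear (I : Ideal R) (f : I →ₗ[R] R) (α : FractionRing R)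
    {j j' : R} (hj : j ∈ I) (hj' : j' ∈ I)
    (h : algebraMap R (FractionRing R) j' = α * algebraMap R (FractionRing R) j) :
    algebraMap R (FractionRing R) (f ⟨j', hj'⟩) = α * algebraMap R (FractionRing R) (f ⟨j, hj⟩) := by
  set φ := algebraMap R (FractionRing R) with hφ
  obtain ⟨⟨c, b⟩, hb⟩ := IsLocalization.surj (nonZeroDivisors R) α
  simp only at hb
  have hbu : IsUnit (φ (b : R)) := IsLocalization.map_units (FractionRing R) b
  have hR : (b : R) * j' = c * j := by
    apply IsFractionRing.injective R (FractionRing R)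
    rw [map_mul, map_mul, h, ← hb]
    ring
  have hsub : ((b : R) • (⟨j', hj'⟩ : I)) = c • (⟨j, hj⟩ : I) := by
    ext; simpa [smul_eq_mul] using hR
  have hf : (b : R) * f ⟨j', hj'⟩ = c * f ⟨j, hj⟩ := by
    have := congrArg f hsub
    rwa [map_smul, map_smul, smul_eq_mul, smul_eq_mul] at this
  have : φ (b : R) * φ (f ⟨j', hj'⟩) = φ (b : R) * (α * φ (f ⟨j, hj⟩)) := by
    rw [← map_mul, hf, map_mul, ← hb]
    ring
  exact hbu.mul_left_cancel this

lemma isIntegral_of_unit_mem {A : Type*} [CommRing A] [Algebra R A]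
    (N : Submodule R A) (hN : N.FG) {u : A} (hu : IsUnit u) (huN : u ∈ N)
    (α : A) (hα : ∀ n ∈ N, α * n ∈ N) : IsIntegral R α := by
  have : Module.Finite R N := Module.Finite.iff_fg.mpr hN
  let e : Module.End R N := (LinearMap.mulLeft R α).restrict hα
  have he : ∀ x : N, ((e x : A)) = α * x := fun x => rfl
  obtain ⟨p, pmon, hp⟩ := (Module.End.isIntegral (R := R) (M := N)).isIntegral e
  have hpow : ∀ (n : ℕ) (x : N), (((e ^ n) x : A)) = α ^ n * x := by
    intro n
    induction n with
    | zero => intro x; simp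
    | succ k ih =>
      intro x
      rw [pow_succ, Module.End.mul_apply, ih, he, pow_succ]
      ring
  have key : ∀ (q : Polynomial R) (x : N),
      (((Polynomial.aeval e q) x : A)) = Polynomial.aeval α q * x := by
    intro q
    induction q using Polynomial.induction_on' with
    | add r s hr hs =>
      intro x
      rw [map_add, map_add, LinearMap.add_apply, Submodule.coe_add, hr, hs, add_mul]
    | monomial n r =>
      intro x
      rw [Polynomial.aeval_monomial, Polynomial.aeval_monomial, Module.End.mul_apply,
        Module.algebraMap_end_apply, SetLike.val_smul, hpow, Algebra.smul_def, mul_assoc]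
  have h0 : Polynomial.aeval α p * u = 0 := by
    have hp' : Polynomial.aeval e p = 0 := by rw [Polynomial.aeval_def]; exact hp
    have h1 : ((Polynomial.aeval e p) ⟨u, huN⟩ : A) = 0 := by rw [hp']; rfl
    rw [key] at h1
    exact h1
  refine ⟨p, pmon, ?_⟩
  rw [← Polynomial.aeval_def]
  exact hu.mul_right_cancel (by rw [h0, zero_mul])

lemma exists_traceIdeal_of_isIntegral (α : FractionRing R) (hα : IsIntegral R α) :
    ∃ I : Ideal R, ((∃ a ∈ I, a ∈ nonZeroDivisors R) ∧ traceIdeal R I = I) ∧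
      ∀ x ∈ I, ∃ y ∈ I,
        α * algebraMap R (FractionRing R) x = algebraMap R (FractionRing R) y := by
  classical
  set φ := algebraMap R (FractionRing R) with hφdef
  obtain ⟨T, hT⟩ := hα.fg_adjoin_singleton
  obtain ⟨b, hb⟩ := IsLocalization.exist_integer_multiples (nonZeroDivisors R) T
    (id : FractionRing R → FractionRing R)
  set A := Subalgebra.toSubmodule (Algebra.adjoin R {α}) with hA
  have hbA : ∀ x ∈ A, ∃ r : R, φ r = φ (b : R) * x := by
    intro x hx
    rw [← hT] at hx
    induction hx using Submodule.span_induction with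
    | mem z hz =>
      obtain ⟨r, hr⟩ := hb z hz
      exact ⟨r, by rw [hr, Algebra.smul_def]; rfl⟩
    | zero => exact ⟨0, by simp⟩
    | add u v _ _ hu hv =>
      obtain ⟨r, hr⟩ := hu; obtain ⟨s, hs⟩ := hv
      exact ⟨r + s, by rw [map_add, hr, hs, mul_add]⟩
    | smul c u _ hu =>
      obtain ⟨r, hr⟩ := hu
      refine ⟨c * r, ?_⟩
      rw [map_mul, hr, Algebra.smul_def]
      ring
  set J : Ideal R :=
    (A.map (LinearMap.mulLeft R (φ (b : R)))).comap (Algebra.linearMap R (FractionRing R))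
    with hJ
  have hmemJ : ∀ j : R, j ∈ J ↔ ∃ s ∈ A, φ (b : R) * s = φ j := by
    intro j
    simp only [hJ, Submodule.mem_comap, Submodule.mem_map, Algebra.linearMap_apply,
      LinearMap.mulLeft_apply]
    exact Iff.rfl
  have hbJ : (b : R) ∈ J := by
    rw [hmemJ]
    exact ⟨1, (Subalgebra.mem_toSubmodule _).mpr (one_mem _), by simp⟩
  have hstab : ∀ j ∈ J, ∃ j' ∈ J, φ j' = α * φ j := by
    intro j hj
    obtain ⟨s, hs, hphi⟩ := (hmemJ j).mp hj
    have hαs : α * s ∈ A := by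
      refine (Subalgebra.mem_toSubmodule _).mpr (mul_mem ?_ ((Subalgebra.mem_toSubmodule _).mp hs))
      exact Algebra.subset_adjoin rfl
    obtain ⟨r, hr⟩ := hbA _ hαs
    refine ⟨r, (hmemJ r).mpr ⟨α * s, hαs, hr.symm⟩, ?_⟩
    rw [hr, ← hphi]
    ring
  refine ⟨traceIdeal R J, ⟨⟨(b : R), le_traceIdeal J hbJ, b.2⟩, traceIdeal_idem J⟩, ?_⟩
  intro x hx
  have hx2 : x ∈ ⨆ g : J →ₗ[R] R, LinearMap.range g := hx
  refine Submodule.iSup_induction' (p := fun g : J →ₗ[R] R => LinearMap.range g)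
    (motive := fun y _ => ∃ z ∈ traceIdeal R J, α * φ y = φ z)
    (fun g m hm => ?_) ?_ (fun u v _ _ hu hv => ?_) hx2
  · obtain ⟨m', rfl⟩ := hm
    obtain ⟨j', hj', hjeq⟩ := hstab (m' : R) m'.2
    refine ⟨g ⟨j', hj'⟩, Submodule.mem_iSup_of_mem g ⟨⟨j', hj'⟩, rfl⟩, ?_⟩
    exact (frac_linear J g α m'.2 hj' hjeq).symm
  · exact ⟨0, Submodule.zero_mem _, by simp⟩
  · obtain ⟨z1, hz1, he1⟩ := hu; obtain ⟨z2, hz2, he2⟩ := hv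
    exact ⟨z1 + z2, Submodule.add_mem _ hz1 hz2, by rw [map_add, mul_add, he1, he2, map_add]⟩

lemma isIntegral_of_mem_colon [IsNoetherianRing R] {I : Ideal R}
    (ha : ∃ a ∈ I, a ∈ nonZeroDivisors R) (α : FractionRing R)
    (hα : ∀ x ∈ I, ∃ y ∈ I,
      α * algebraMap R (FractionRing R) x = algebraMap R (FractionRing R) y) :
    IsIntegral R α := by
  obtain ⟨a, haI, hareg⟩ := ha
  set N : Submodule R (FractionRing R) :=
    Submodule.map (Algebra.linearMap R (FractionRing R)) I with hN
  have hNfg : N.FG := (IsNoetherian.noetherian I).map _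
  have hu : IsUnit (algebraMap R (FractionRing R) a) :=
    IsLocalization.map_units (FractionRing R) ⟨a, hareg⟩
  have huN : algebraMap R (FractionRing R) a ∈ N := ⟨a, haI, rfl⟩
  refine isIntegral_of_unit_mem N hNfg hu huN α ?_
  rintro _ ⟨x, hx, rfl⟩
  obtain ⟨y, hy, hxy⟩ := hα x hx
  exact ⟨y, hy, hxy.symm⟩

/-- The `(I : I)` as a submodule of the fraction ring. -/
def colonSub (I : Ideal R) : Submodule R (FractionRing R) where
  carrier := {α : FractionRing R | ∀ x ∈ I, ∃ y ∈ I,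
    α * algebraMap R (FractionRing R) x = algebraMap R (FractionRing R) y}
  add_mem' := by
    intro α β hαm hβm x hx
    obtain ⟨y, hy, hy2⟩ := hαm x hx
    obtain ⟨z, hz, hz2⟩ := hβm x hx
    exact ⟨y + z, Submodule.add_mem _ hy hz, by rw [add_mul, hy2, hz2, map_add]⟩
  zero_mem' := by
    intro x hx
    exact ⟨0, Submodule.zero_mem _, by simp⟩
  smul_mem' := by
    intro c α hαm x hx
    obtain ⟨y, hy, hy2⟩ := hαm x hx
    refine ⟨c * y, Ideal.mul_mem_left _ _ hy, ?_⟩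
    rw [smul_mul_assoc, hy2, Algebra.smul_def, map_mul]

lemma colonSub_fg [IsNoetherianRing R] {I : Ideal R}
    (ha : ∃ a ∈ I, a ∈ nonZeroDivisors R) : (colonSub I).FG := by
  obtain ⟨a, haI, hareg⟩ := ha
  have hu : IsUnit (algebraMap R (FractionRing R) a) :=
    IsLocalization.map_units (FractionRing R) ⟨a, hareg⟩
  set L : FractionRing R →ₗ[R] FractionRing R :=
    LinearMap.mulLeft R (algebraMap R (FractionRing R) a) with hL
  have hLinj : Function.Injective L := fun x y hxy => hu.mul_left_cancel hxy
  set Rng : Submodule R (FractionRing R) :=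
    LinearMap.range (Algebra.linearMap R (FractionRing R)) with hRng
  have hle : (colonSub I).map L ≤ Rng := by
    rintro _ ⟨α, hαm, rfl⟩
    obtain ⟨y, _, hy2⟩ := hαm a haI
    exact ⟨y, by rw [Algebra.linearMap_apply, ← hy2, hL, LinearMap.mulLeft_apply, mul_comm]⟩
  haveI : IsNoetherian R Rng :=
    isNoetherian_of_linearEquiv
      (LinearEquiv.ofInjective (Algebra.linearMap R (FractionRing R))
        (IsFractionRing.injective R (FractionRing R)))
  have hmapfg : ((colonSub I).map L).FG := by
    have h1 : (((colonSub I).map L).comap Rng.subtype).FG := IsNoetherian.noetherian _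
    have h2 := h1.map Rng.subtype
    rwa [Submodule.map_comap_subtype, inf_eq_right.mpr hle] at h2
  exact Submodule.fg_of_fg_map_injective L hLinj hmapfg

end aux

/-- The integral closure `R̄` of a Noetherian ring `R` in its total ring of fractions is
the union, over all regular trace ideals `I` of `R`, of the sets `(I : I) ⊆ Q(R)`.
Consequently, if `R` has only finitely many regular trace ideals, then `R̄` is a finitely
generated `R`-module. -/
theorem integralClosure_eq_iUnion_colon_of_traceIdeals (R : Type*) [CommRing R]
    [IsNoetherianRing R] :
    ((integralClosure R (FractionRing R) : Set (FractionRing R)) =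
      ⋃ I ∈ {I : Ideal R | (∃ a ∈ I, a ∈ nonZeroDivisors R) ∧ traceIdeal R I = I},
        {α : FractionRing R | ∀ x ∈ I, ∃ y ∈ I,
          α * algebraMap R (FractionRing R) x = algebraMap R (FractionRing R) y}) ∧
    ({I : Ideal R | (∃ a ∈ I, a ∈ nonZeroDivisors R) ∧ traceIdeal R I = I}.Finite →
      Module.Finite R (integralClosure R (FractionRing R))) := by
  have hmain : (integralClosure R (FractionRing R) : Set (FractionRing R)) =
      ⋃ I ∈ {I : Ideal R | (∃ a ∈ I, a ∈ nonZeroDivisors R) ∧ traceIdeal R I = I},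
        {α : FractionRing R | ∀ x ∈ I, ∃ y ∈ I,
          α * algebraMap R (FractionRing R) x = algebraMap R (FractionRing R) y} := by
    ext α
    constructor
    · intro h
      obtain ⟨I, hI, hst⟩ := exists_traceIdeal_of_isIntegral α h
      exact Set.mem_iUnion₂.mpr ⟨I, hI, hst⟩
    · intro h
      obtain ⟨I, hI, hst⟩ := Set.mem_iUnion₂.mp h
      exact isIntegral_of_mem_colon hI.1 α hst
  refine ⟨hmain, fun hfin => ?_⟩
  haveI := hfin.to_subtype
  have hfg : (⨆ I : {I : Ideal R | (∃ a ∈ I, a ∈ nonZeroDivisors R) ∧ traceIdeal R I = I},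
      colonSub (I : Ideal R)).FG :=
    Submodule.fg_iSup _ fun I => colonSub_fg I.2.1
  have heq : Subalgebra.toSubmodule (integralClosure R (FractionRing R)) =
      ⨆ I : {I : Ideal R | (∃ a ∈ I, a ∈ nonZeroDivisors R) ∧ traceIdeal R I = I},
        colonSub (I : Ideal R) := by
    apply le_antisymm
    · intro α hα
      have h1 : α ∈ (integralClosure R (FractionRing R) : Set (FractionRing R)) := hα
      rw [hmain] at h1
      obtain ⟨I, hI, hst⟩ := Set.mem_iUnion₂.mp h1
      exact Submodule.mem_iSup_of_mem ⟨I, hI⟩ hst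
    · refine iSup_le fun I => ?_
      intro α hα
      have h1 : α ∈ (integralClosure R (FractionRing R) : Set (FractionRing R)) := by
        rw [hmain]
        exact Set.mem_iUnion₂.mpr ⟨I.1, I.2, hα⟩
      exact h1
  have hfg2 : (Subalgebra.toSubmodule (integralClosure R (FractionRing R))).FG := by
    rw [heq]; exact hfg
  exact Module.Finite.iff_fg.mpr hfg2
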